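/- Let R be a set of infinite partitions of ℕ and let M_R be the union of all dual Ellentuck neighborhoods [t,Z]_m such that R ∩ [t,Z]_m is meager with respect to the dual Ellentuck topology. Then the set R ∪ (complement of M_R in the infinite partitions) has the Baire property with respect to the dual Ellentuck topology. -/
import Mathlib


/-- The set of infinite partitions of ℕ, identified with equivalence relations
on ℕ with infinite quotient. -/
abbrev InfPart := {X : Setoid ℕ // Infinite (Quotient X)}

/-- The dual Ellentuck neighborhood `[s,X]_n`: all infinite partitions `Y` such that
`s` is an `n`-segment of `Y` and `Y` is coarser than `X`. -/
def nbhd (n : ℕ) (s : ℕ → ℕ → Prop) (X : InfPart) : Set InfPart :=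
  {Y | (∀ i < n, ∀ j < n, (s i j ↔ Y.1.r i j)) ∧ ∀ a b, X.1.r a b → Y.1.r a b}

/-- The condition for `[s,X]_n` to be a (nonempty-typed) dual Ellentuck neighborhood:
`∀ i j < n, X.r i j → s i j`. -/
def IsNbhd (n : ℕ) (s : ℕ → ℕ → Prop) (X : InfPart) : Prop :=
  ∀ i < n, ∀ j < n, (X.1.r i j → s i j)


/-- The dual Ellentuck topology, generated by the dual Ellentuck neighborhoods. -/
instance dualEllentuck : TopologicalSpace InfPart :=
  TopologicalSpace.generateFrom
    {U | ∃ (n : ℕ) (s : ℕ → ℕ → Prop) (X : InfPart), IsNbhd n s X ∧ U = nbhd n s X}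


/-- The union of all dual Ellentuck neighborhoods in which R is meager. -/
def MR (R : Set InfPart) : Set InfPart :=
  {Y | ∃ (m : ℕ) (t : ℕ → ℕ → Prop) (Z : InfPart),
    IsNbhd m t Z ∧ IsMeagre (R ∩ nbhd m t Z) ∧ Y ∈ nbhd m t Z}

open Set Topology

section Banach

variable {α : Type*} [TopologicalSpace α]

lemma isNowhereDense_mono' {s t : Set α} (ht : IsNowhereDense t) (hst : s ⊆ t) :
    IsNowhereDense s := by
  rw [IsNowhereDense, ← subset_empty_iff] at *
  exact (interior_mono (closure_mono hst)).trans ht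

lemma IsNowhereDense.isMeagre' {s : Set α} (hs : IsNowhereDense s) : IsMeagre s := by
  rw [isMeagre_iff_countable_union_isNowhereDense]
  exact ⟨{s}, by simpa, countable_singleton s, by simp⟩

lemma isMeagre_union {s t : Set α} (hs : IsMeagre s) (ht : IsMeagre t) : IsMeagre (s ∪ t) := by
  rw [IsMeagre, compl_union]
  exact Filter.inter_mem hs ht

/-- Banach category theorem: if `A` has meager intersection with every member of a family of
open sets, then it has meager intersection with the union. -/
theorem banach_category {A : Set α} {𝒰 : Set (Set α)}
    (hU : ∀ U ∈ 𝒰, IsOpen U) (hm : ∀ U ∈ 𝒰, IsMeagre (A ∩ U)) :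
    IsMeagre (A ∩ ⋃₀ 𝒰) := by
  classical
  -- family of pairwise disjoint nonempty open sets refining 𝒰
  set P : Set (Set (Set α)) :=
    {M | (∀ V ∈ M, IsOpen V ∧ V.Nonempty ∧ ∃ U ∈ 𝒰, V ⊆ U) ∧ M.PairwiseDisjoint id} with hP
  obtain ⟨M, hMmax⟩ : ∃ M, Maximal (· ∈ P) M := by
    apply zorn_subset
    intro c hcP hc
    refine ⟨⋃₀ c, ⟨?_, ?_⟩, fun s hs => subset_sUnion_of_mem hs⟩
    · rintro V ⟨m, hm, hV⟩
      exact (hcP hm).1 V hV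
    · intro V hV W hW hVW
      obtain ⟨m, hmc, hVm⟩ := hV
      obtain ⟨m', hm'c, hWm'⟩ := hW
      rcases hc.total hmc hm'c with h | h
      · exact (hcP hm'c).2 (h hVm) hWm' hVW
      · exact (hcP hmc).2 hVm (h hWm') hVW
  have hMP : M ∈ P := hMmax.1
  -- Claim 1 : ⋃₀ 𝒰 ⊆ closure (⋃₀ M)
  have hdense : ⋃₀ 𝒰 ⊆ closure (⋃₀ M) := by
    rintro x ⟨U, hU𝒰, hxU⟩
    by_contra hx
    set W : Set α := U ∩ (closure (⋃₀ M))ᶜ with hW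
    have hWopen : IsOpen W := (hU U hU𝒰).inter isClosed_closure.isOpen_compl
    have hWne : W.Nonempty := ⟨x, hxU, hx⟩
    have hWP : insert W M ∈ P := by
      constructor
      · rintro V (rfl | hV)
        · exact ⟨hWopen, hWne, U, hU𝒰, inter_subset_left⟩
        · exact hMP.1 V hV
      · intro V hV V' hV' hne
        rcases hV with rfl | hV
        · rcases hV' with rfl | hV'
          · exact absurd rfl hne
          · refine Set.disjoint_left.mpr fun z hzV hzV' => ?_
            exact hzV.2 (subset_closure ⟨V', hV', hzV'⟩)
        · rcases hV' with rfl | hV'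
          · refine Set.disjoint_left.mpr fun z hzV hzV' => ?_
            exact hzV'.2 (subset_closure ⟨V, hV, hzV⟩)
          · exact hMP.2 hV hV' hne
    have : W ∈ M := by
      have := hMmax.2 hWP (subset_insert W M)
      exact this (mem_insert W M)
    obtain ⟨z, hz⟩ := hWne
    exact hz.2 (subset_closure ⟨W, this, hz⟩)
  -- Claim 2 : A ∩ ⋃₀ M is meager
  have key : ∀ V ∈ M, ∃ f : ℕ → Set α,
      (∀ k, IsNowhereDense (f k) ∧ f k ⊆ V) ∧ A ∩ V ⊆ ⋃ k, f k := by
    intro V hV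
    obtain ⟨_, _, U, hU𝒰, hVU⟩ := hMP.1 V hV
    have : IsMeagre (A ∩ V) := (hm U hU𝒰).mono (inter_subset_inter_right A hVU)
    rw [isMeagre_iff_countable_union_isNowhereDense] at this
    obtain ⟨S, hSnd, hScnt, hSsub⟩ := this
    obtain ⟨e, he⟩ := (hScnt.insert ∅).exists_eq_range (insert_nonempty _ _)
    refine ⟨fun k => e k ∩ V, fun k => ⟨?_, inter_subset_right⟩, ?_⟩
    · have : e k ∈ insert ∅ S := he ▸ mem_range_self k
      rcases this with h | h
      · exact isNowhereDense_mono' isNowhereDense_empty (by simp [h])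
      · exact isNowhereDense_mono' (hSnd _ h) inter_subset_left
    · intro z hz
      obtain ⟨t, htS, hzt⟩ := hSsub hz
      have : t ∈ range e := he ▸ Or.inr htS
      obtain ⟨k, rfl⟩ := this
      exact mem_iUnion.mpr ⟨k, hzt, hz.2⟩
  choose! f hf1 hf2 using key
  set N : ℕ → Set α := fun k => ⋃ V ∈ M, f V k with hN
  have hNnd : ∀ k, IsNowhereDense (N k) := by
    intro k
    rw [IsNowhereDense, eq_empty_iff_forall_notMem]
    intro x hx
    set O := interior (closure (N k)) with hO
    have hOopen : IsOpen O := isOpen_interior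
    have hOsub : O ⊆ closure (N k) := interior_subset
    -- O meets ⋃₀ M
    have hNsub : N k ⊆ ⋃₀ M := by
      rintro z hz
      obtain ⟨V, hV, hzf⟩ := mem_iUnion₂.mp hz
      exact ⟨V, hV, (hf1 V hV k).2 hzf⟩
    have hxcl : x ∈ closure (⋃₀ M) := closure_mono hNsub (hOsub hx)
    obtain ⟨y, hyO, V, hVM, hyV⟩ :
        ∃ y, y ∈ O ∧ ∃ V ∈ M, y ∈ V := by
      rw [mem_closure_iff] at hxcl
      obtain ⟨y, hyO, hyU⟩ := hxcl O hOopen hx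
      exact ⟨y, hyO, hyU⟩
    -- O ∩ V ⊆ closure (f V k)
    have hsub : O ∩ V ⊆ closure (f V k) := by
      intro z hz
      rw [mem_closure_iff]
      intro W hWopen hzW
      have hz' : z ∈ closure (N k) := hOsub hz.1
      rw [mem_closure_iff] at hz'
      obtain ⟨w, hw, hwN⟩ := hz' (W ∩ O ∩ V) (hWopen.inter hOopen |>.inter ((hMP.1 V hVM).1))
        ⟨⟨hzW, hz.1⟩, hz.2⟩
      obtain ⟨V', hV'M, hwf⟩ := mem_iUnion₂.mp hwN
      have hV'eq : V' = V := by
        by_contra hne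
        exact Set.disjoint_left.mp (hMP.2 hV'M hVM hne) ((hf1 V' hV'M k).2 hwf) hw.2
      exact ⟨w, hw.1.1, hV'eq ▸ hwf⟩
    have : O ∩ V ⊆ interior (closure (f V k)) :=
      interior_maximal hsub (hOopen.inter (hMP.1 V hVM).1)
    rw [(hf1 V hVM k).1] at this
    exact this ⟨hyO, hyV⟩
  have hAM : A ∩ ⋃₀ M ⊆ ⋃ k, N k := by
    rintro z ⟨hzA, V, hVM, hzV⟩
    obtain ⟨k, hk⟩ := mem_iUnion.mp (hf2 V hVM ⟨hzA, hzV⟩)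
    exact mem_iUnion.mpr ⟨k, mem_iUnion₂.mpr ⟨V, hVM, hk⟩⟩
  have hmeagreM : IsMeagre (A ∩ ⋃₀ M) :=
    (isMeagre_iUnion (fun k => (hNnd k).isMeagre')).mono hAM
  -- Claim 3 : conclusion
  have hopen : IsOpen (⋃₀ M) := isOpen_sUnion fun V hV => (hMP.1 V hV).1
  have hfront : IsNowhereDense (closure (⋃₀ M) \ ⋃₀ M) := by
    have hclosed : IsClosed (closure (⋃₀ M) \ ⋃₀ M) := by
      rw [diff_eq]
      exact isClosed_closure.inter (isClosed_compl_iff.mpr hopen)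
    rw [hclosed.isNowhereDense_iff, eq_empty_iff_forall_notMem]
    intro x hx
    have hxcl : x ∈ closure (⋃₀ M) := (interior_subset hx).1
    rw [mem_closure_iff] at hxcl
    obtain ⟨y, hy, hyM⟩ := hxcl _ isOpen_interior hx
    exact (interior_subset hy).2 hyM
  have hsub : A ∩ ⋃₀ 𝒰 ⊆ (A ∩ ⋃₀ M) ∪ (closure (⋃₀ M) \ ⋃₀ M) := by
    rintro z ⟨hzA, hz𝒰⟩
    by_cases h : z ∈ ⋃₀ M
    · exact Or.inl ⟨hzA, h⟩
    · exact Or.inr ⟨hdense hz𝒰, h⟩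
  exact (isMeagre_union hmeagreM hfront.isMeagre').mono hsub

end Banach

/-- The set R ∪ (M_R)ᶜ has the Baire property in the dual Ellentuck topology. -/
theorem baireMeasurable_union_compl_MR (R : Set InfPart) :
    BaireMeasurableSet (R ∪ (MR R)ᶜ) := by
  set 𝒰 : Set (Set InfPart) :=
    {U | ∃ m t Z, IsNbhd m t Z ∧ IsMeagre (R ∩ nbhd m t Z) ∧ U = nbhd m t Z} with h𝒰
  have hMR : MR R = ⋃₀ 𝒰 := by
    ext Y
    constructor
    · rintro ⟨m, t, Z, h1, h2, h3⟩
      exact ⟨nbhd m t Z, ⟨m, t, Z, h1, h2, rfl⟩, h3⟩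
    · rintro ⟨U, ⟨m, t, Z, h1, h2, rfl⟩, h3⟩
      exact ⟨m, t, Z, h1, h2, h3⟩
  have hopenU : ∀ U ∈ 𝒰, IsOpen U := by
    rintro U ⟨m, t, Z, h1, _, rfl⟩
    exact TopologicalSpace.GenerateOpen.basic _ ⟨m, t, Z, h1, rfl⟩
  have hmU : ∀ U ∈ 𝒰, IsMeagre (R ∩ U) := by
    rintro U ⟨m, t, Z, _, h2, rfl⟩; exact h2
  have hmeagre : IsMeagre (R ∩ MR R) := hMR ▸ banach_category hopenU hmU
  have hopen : IsOpen (MR R) := hMR ▸ isOpen_sUnion hopenU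
  have heq : R ∪ (MR R)ᶜ = (MR R)ᶜ ∪ (R ∩ MR R) := by
    ext x; by_cases h : x ∈ MR R <;> simp [h]
  rw [heq]
  exact (hopen.baireMeasurableSet.compl).union hmeagre.baireMeasurableSet
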